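/- Let N = 2^n, N̄ = 2^{n̄} with n̄ < n, σ a permutation of the n bit positions, and let B be the image of {0,...,N-N̄-1} under the bit-permutation induced by σ. Then the submatrix G_N(B^c, B^c) (rows and columns restricted to B^c in increasing order) equals G_{N̄}; that is, every bit-permuted successive puncturing pattern with power-of-two complement size is hierarchical. -/

import Mathlib

/-- The 2×2 Arikan kernel over GF(2). -/
def G2 : Matrix (Fin 2) (Fin 2) (ZMod 2) := !![1, 0; 1, 1]

/-- Entry `(i,j)` of the `n`-fold Kronecker power `G_2^{⊗n}` of the Arikan kernel,
under the standard index identification `i = Σ_k b_k(i) 2^k`: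
`(G_2^{⊗n})_{i,j} = ∏_k (G_2)_{b_k(i), b_k(j)}`. -/
def Gnat (n : ℕ) (i j : ℕ) : ZMod 2 :=
  ∏ k ∈ Finset.range n,
    G2 (if Nat.testBit i k then 1 else 0) (if Nat.testBit j k then 1 else 0)

/-- The matrix `G_N = G_2^{⊗n}` (with `N = 2^n`) over GF(2). -/
def GN (n : ℕ) : Matrix (Fin (2 ^ n)) (Fin (2 ^ n)) (ZMod 2) :=
  Matrix.of fun i j => Gnat n i.val j.val

/-- `Dom j i` : the binary expansion of `j` is bitwise dominated by that of `i`. -/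
def Dom (j i : ℕ) : Prop := ∀ k, Nat.testBit j k = true → Nat.testBit i k = true

/-- The bit-permutation map on `{0,...,2^n-1}` induced by a permutation `σ` of
the `n` bit positions: bit `k` of the output is bit `σ(k)` of the input. -/
def bperm (n : ℕ) (σ : Equiv.Perm (Fin n)) (i : ℕ) : ℕ :=
  ∑ k : Fin n, if Nat.testBit i (σ k) then 2 ^ (k : ℕ) else 0

/-! ### Auxiliary lemmas -/

namespace Stmt19Aux

lemma sum_range_two_pow (a : ℕ) : ∑ i ∈ Finset.range a, 2^i = 2^a - 1 := by
  induction a with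
  | zero => simp
  | succ a ih =>
    rw [Finset.sum_range_succ, ih, pow_succ]
    have := Nat.one_le_two_pow (n := a)
    omega

lemma sum_lt {s : Finset ℕ} {a : ℕ} (h : ∀ x ∈ s, x < a) :
    ∑ i ∈ s, 2^i < 2^a := by
  calc ∑ i ∈ s, 2^i ≤ ∑ i ∈ Finset.range a, 2^i :=
        Finset.sum_le_sum_of_subset (fun x hx => Finset.mem_range.2 (h x hx))
  _ < 2^a := by rw [sum_range_two_pow]; have := Nat.one_le_two_pow (n := a); omega

lemma testBit_sum (s : Finset ℕ) (j : ℕ) :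
    Nat.testBit (∑ i ∈ s, 2^i) j = decide (j ∈ s) := by
  induction s using Finset.induction_on_max with
  | empty => simp
  | insert a s hlt ih =>
    have ha : a ∉ s := fun h => lt_irrefl a (hlt a h)
    rw [Finset.sum_insert ha]
    have hx : ∑ i ∈ s, 2^i < 2^a := sum_lt hlt
    have h1 : (2:ℕ)^a + ∑ i ∈ s, 2^i = 2^a * 1 + ∑ i ∈ s, 2^i := by ring
    rw [h1, Nat.testBit_two_pow_mul_add 1 hx j]
    by_cases hja : j < a
    · simp only [if_pos hja, ih, decide_eq_decide, Finset.mem_insert]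
      exact ⟨fun h => Or.inr h, fun h => h.elim (fun h' => absurd h' (by omega)) id⟩
    · simp only [if_neg hja]
      rcases Nat.eq_or_lt_of_le (Nat.le_of_not_lt hja) with h | h
      · subst h
        simp [Nat.sub_self]
      · have : Nat.testBit 1 (j - a) = false := by
          rw [Nat.testBit_eq_false_of_lt]
          have : 1 ≤ j - a := by omega
          calc (1:ℕ) < 2^1 := by norm_num
          _ ≤ 2^(j-a) := Nat.pow_le_pow_right (by norm_num) this
        rw [this]
        have : j ∉ insert a s := by
          simp only [Finset.mem_insert]
          push_neg
          exact ⟨by omega, fun hj => by have := hlt j hj; omega⟩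
        simp [this]

/-- The finset of positions of `1`-bits of `m`. -/
noncomputable def bset (m : ℕ) : Finset ℕ := m.bitIndices.toFinset

lemma bset_sum (m : ℕ) : ∑ i ∈ bset m, 2^i = m := by
  simpa [bset] using Nat.twoPowSum_toFinset_bitIndices m

lemma mem_bset {m a : ℕ} : a ∈ bset m ↔ Nat.testBit m a := by
  conv_rhs => rw [← bset_sum m]
  rw [testBit_sum]
  simp

lemma bset_of_sum {s : Finset ℕ} : bset (∑ i ∈ s, 2^i) = s := by
  ext a
  rw [mem_bset, testBit_sum]
  simp

lemma bset_subset {m nb : ℕ} (h : m < 2^nb) : ∀ a ∈ bset m, a < nb := by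
  intro a ha
  rw [mem_bset] at ha
  by_contra hc
  have := Nat.testBit_lt_two_pow (x := m) (i := a)
    (lt_of_lt_of_le h (Nat.pow_le_pow_right (by norm_num) (by omega)))
  rw [this] at ha; exact Bool.noConfusion ha

lemma bperm_eq_sum (n : ℕ) (σ : Equiv.Perm (Fin n)) (i : ℕ) :
    bperm n σ i = ∑ k ∈ Finset.image Fin.val
      (Finset.univ.filter fun k : Fin n => Nat.testBit i (σ k)), 2^k := by
  rw [Finset.sum_image (by intro x _ y _ h; exact Fin.val_injective h)]
  rw [bperm, ← Finset.sum_filter]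

lemma bperm_lt (n : ℕ) (σ : Equiv.Perm (Fin n)) (i : ℕ) : bperm n σ i < 2^n := by
  rw [bperm_eq_sum]
  apply sum_lt
  intro x hx
  simp only [Finset.mem_image] at hx
  obtain ⟨k, _, rfl⟩ := hx
  exact k.2

lemma testBit_bperm (n : ℕ) (σ : Equiv.Perm (Fin n)) (i : ℕ) (k : Fin n) :
    Nat.testBit (bperm n σ i) k = Nat.testBit i (σ k) := by
  rw [bperm_eq_sum, testBit_sum]
  simp only [Finset.mem_image, Finset.mem_filter, Finset.mem_univ, true_and]
  by_cases h : Nat.testBit i (σ k)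
  · simp only [h, decide_eq_true_eq]
    exact ⟨k, h, rfl⟩
  · simp only [h]
    rw [decide_eq_false]
    rintro ⟨y, hy, hyk⟩
    have : y = k := Fin.val_injective hyk
    subst this
    exact h hy

lemma bperm_inv (n : ℕ) (σ : Equiv.Perm (Fin n)) (i : ℕ) (hi : i < 2^n) :
    bperm n σ⁻¹ (bperm n σ i) = i := by
  apply Nat.eq_of_testBit_eq
  intro j
  by_cases hj : j < n
  · rw [show j = ((⟨j, hj⟩ : Fin n) : ℕ) from rfl, testBit_bperm, testBit_bperm]
    simp
  · rw [Nat.testBit_lt_two_pow, Nat.testBit_lt_two_pow]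
    · exact lt_of_lt_of_le hi (Nat.pow_le_pow_right (by norm_num) (by omega))
    · exact lt_of_lt_of_le (bperm_lt n σ⁻¹ _) (Nat.pow_le_pow_right (by norm_num) (by omega))

lemma high_bits (n nb : ℕ) (hn : nb < n) (y : ℕ) (hy : y < 2^n) :
    2^n - 2^nb ≤ y ↔ ∀ k, nb ≤ k → k < n → Nat.testBit y k = true := by
  have hnb : (2:ℕ)^nb ≤ 2^n := Nat.pow_le_pow_right (by norm_num) hn.le
  have hpow : (2:ℕ)^(n-nb) * 2^nb = 2^n := by
    rw [← pow_add]; congr 1; omega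
  constructor
  · intro h k hk1 hk2
    have hdiv : y / 2^nb = 2^(n-nb) - 1 := by
      have h1 : 2^(n-nb) - 1 ≤ y / 2^nb := by
        rw [Nat.le_div_iff_mul_le (Nat.pow_pos (by norm_num))]
        have : ((2:ℕ)^(n-nb) - 1) * 2^nb = 2^n - 2^nb := by
          rw [Nat.sub_mul, hpow, one_mul]
        omega
      have h2 : y / 2^nb < 2^(n-nb) := by
        rw [Nat.div_lt_iff_lt_mul (Nat.pow_pos (by norm_num)), hpow]
        exact hy
      omega
    have : Nat.testBit y k = Nat.testBit (y / 2^nb) (k - nb) := by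
      rw [← Nat.shiftRight_eq_div_pow, Nat.testBit_shiftRight]
      congr 1; omega
    rw [this, hdiv, Nat.testBit_two_pow_sub_one]
    simp; omega
  · intro h
    have hsub : Finset.Ico nb n ⊆ bset y := by
      intro k hk
      simp only [Finset.mem_Ico] at hk
      rw [mem_bset]
      exact h k hk.1 hk.2
    have : ∑ k ∈ Finset.Ico nb n, 2^k ≤ ∑ k ∈ bset y, 2^k :=
      Finset.sum_le_sum_of_subset hsub
    rw [bset_sum] at this
    have hico : ∑ k ∈ Finset.Ico nb n, (2:ℕ)^k = 2^n - 2^nb := by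
      have h1 : ∑ k ∈ Finset.range nb, (2:ℕ)^k + ∑ k ∈ Finset.Ico nb n, (2:ℕ)^k
          = ∑ k ∈ Finset.range n, (2:ℕ)^k := by
        rw [Finset.range_eq_Ico, Finset.range_eq_Ico]
        exact Finset.sum_Ico_consecutive _ (by omega) (by omega)
      have h2 : ∑ k ∈ Finset.range nb, (2:ℕ)^k = 2^nb - 1 := sum_range_two_pow nb
      have h3 : ∑ k ∈ Finset.range n, (2:ℕ)^k = 2^n - 1 := sum_range_two_pow n
      have h4 : (1:ℕ) ≤ 2^nb := Nat.one_le_two_pow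
      omega
    omega

section Main

variable {n nb : ℕ} (σ : Equiv.Perm (Fin n))

/-- Positions whose image under `σ` is a low bit position. -/
def Tset (nb : ℕ) (σ : Equiv.Perm (Fin n)) : Finset (Fin n) :=
  Finset.univ.filter fun k => (σ k : ℕ) < nb

lemma Tset_card (hn : nb ≤ n) : (Tset nb σ).card = nb := by
  have himg : Tset nb σ =
      (Finset.univ.filter fun k : Fin n => (k : ℕ) < nb).image σ.symm := by
    ext k
    simp only [Tset, Finset.mem_filter, Finset.mem_univ, true_and, Finset.mem_image]
    constructor
    · intro h; exact ⟨σ k, h, by simp⟩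
    · rintro ⟨y, hy, rfl⟩; simpa using hy
  rw [himg, Finset.card_image_of_injective _ σ.symm.injective]
  apply Finset.card_eq_of_bijective (fun i hi => ⟨i, lt_of_lt_of_le hi hn⟩)
  · intro a ha
    simp only [Finset.mem_filter, Finset.mem_univ, true_and] at ha
    exact ⟨a.val, ha, Fin.ext rfl⟩
  · intro i hi
    simp [hi]
  · intro i j hi hj hij
    simpa using congrArg Fin.val hij

variable (hn : nb < n)

/-- The strictly monotone extension to `ℕ` of the increasing enumeration of `Tset`. -/
noncomputable def pval (hn : nb < n) : ℕ → ℕ := fun a =>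
  if h : a < nb then ((Tset nb σ).orderEmbOfFin (Tset_card σ hn.le) ⟨a, h⟩ : Fin n).val
  else n + a

lemma pval_lt {a : ℕ} (h : a < nb) : pval σ hn a < n := by
  rw [pval, dif_pos h]
  exact (((Tset nb σ).orderEmbOfFin (Tset_card σ hn.le)) ⟨a, h⟩).2

lemma pval_mem {a : ℕ} (h : a < nb) :
    (⟨pval σ hn a, pval_lt σ hn h⟩ : Fin n) ∈ Tset nb σ := by
  have := (Tset nb σ).orderEmbOfFin_mem (Tset_card σ hn.le) ⟨a, h⟩
  convert this
  rw [pval, dif_pos h]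

lemma pval_of_ge {a : ℕ} (h : nb ≤ a) : pval σ hn a = n + a :=
  dif_neg (by omega)

lemma pval_strictMono : StrictMono (pval σ hn) := by
  intro a b hab
  rcases lt_or_ge b nb with hb | hb
  · have ha : a < nb := lt_trans hab hb
    rw [pval, dif_pos ha, pval, dif_pos hb]
    have : (⟨a, ha⟩ : Fin nb) < ⟨b, hb⟩ := hab
    exact ((Tset nb σ).orderEmbOfFin (Tset_card σ hn.le)).strictMono this
  · rcases lt_or_ge a nb with ha | ha
    · have h1 : pval σ hn a < n := pval_lt σ hn ha
      rw [pval_of_ge σ hn hb]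
      omega
    · rw [pval_of_ge σ hn hb, pval_of_ge σ hn ha]
      omega

lemma pval_surj {k : Fin n} (hk : k ∈ Tset nb σ) :
    ∃ a, a < nb ∧ pval σ hn a = k.val := by
  have : (k : Fin n) ∈ (↑(Tset nb σ) : Set (Fin n)) := hk
  rw [← Finset.range_orderEmbOfFin (Tset nb σ) (Tset_card σ hn.le)] at this
  obtain ⟨a, ha⟩ := this
  exact ⟨a.val, a.2, by rw [pval, dif_pos a.2]; exact congrArg Fin.val (by simpa using ha)⟩

/-- The bit-position set of the `m`-th element of the complement. -/
noncomputable def Uset (σ : Equiv.Perm (Fin n)) (hn : nb < n) (m : ℕ) : Finset ℕ :=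
  (bset m).image (pval σ hn) ∪ (Tset nb σ)ᶜ.image Fin.val

/-- The `m`-th element (in increasing order) of the complement set. -/
noncomputable def fnat (σ : Equiv.Perm (Fin n)) (hn : nb < n) (m : ℕ) : ℕ :=
  ∑ k ∈ Uset σ hn m, 2^k

lemma Uset_sub {m : ℕ} (hm : m < 2^nb) : ∀ x ∈ Uset σ hn m, x < n := by
  intro x hx
  rcases Finset.mem_union.1 hx with h | h
  · obtain ⟨a, ha, rfl⟩ := Finset.mem_image.1 h
    exact pval_lt σ hn (bset_subset hm a ha)
  · obtain ⟨k, _, rfl⟩ := Finset.mem_image.1 h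
    exact k.2

lemma fnat_lt {m : ℕ} (hm : m < 2^nb) : fnat σ hn m < 2^n :=
  sum_lt (Uset_sub σ hn hm)

lemma testBit_fnat (m j : ℕ) :
    Nat.testBit (fnat σ hn m) j = decide (j ∈ Uset σ hn m) :=
  testBit_sum _ j

lemma Uset_disj {m : ℕ} (hm : m < 2^nb) :
    Disjoint ((bset m).image (pval σ hn)) ((Tset nb σ)ᶜ.image Fin.val) := by
  rw [Finset.disjoint_left]
  rintro x hx hx'
  obtain ⟨a, ha, rfl⟩ := Finset.mem_image.1 hx
  obtain ⟨k, hk, hkv⟩ := Finset.mem_image.1 hx'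
  have ha' : a < nb := bset_subset hm a ha
  have hmem := pval_mem σ hn ha'
  have : k = ⟨pval σ hn a, pval_lt σ hn ha'⟩ := Fin.ext hkv
  subst this
  rw [Finset.mem_compl] at hk
  exact hk hmem

lemma mem_Uset_pval {m a : ℕ} (ha : a < nb) :
    (pval σ hn a ∈ Uset σ hn m) ↔ Nat.testBit m a = true := by
  rw [Uset, Finset.mem_union]
  constructor
  · rintro (h | h)
    · obtain ⟨b, hb, hba⟩ := Finset.mem_image.1 h
      have : b = a := (pval_strictMono σ hn).injective hba
      subst this
      exact mem_bset.1 hb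
    · obtain ⟨k, hk, hkv⟩ := Finset.mem_image.1 h
      have : k = ⟨pval σ hn a, pval_lt σ hn ha⟩ := Fin.ext hkv
      subst this
      rw [Finset.mem_compl] at hk
      exact absurd (pval_mem σ hn ha) hk
  · intro h
    exact Or.inl (Finset.mem_image.2 ⟨a, mem_bset.2 h, rfl⟩)

lemma mem_Uset_compl {m : ℕ} {k : Fin n} (hk : k ∉ Tset nb σ) :
    k.val ∈ Uset σ hn m :=
  Finset.mem_union.2 (Or.inr (Finset.mem_image.2 ⟨k, Finset.mem_compl.2 hk, rfl⟩))

lemma fnat_strictMono {m m' : ℕ} (hm : m < 2^nb) (hm' : m' < 2^nb) (hmm : m < m') :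
    fnat σ hn m < fnat σ hn m' := by
  rw [fnat, fnat, Uset, Uset, Finset.sum_union (Uset_disj σ hn hm),
    Finset.sum_union (Uset_disj σ hn hm')]
  have h1 : toColex (bset m) < toColex (bset m') := by
    rw [← Finset.geomSum_lt_geomSum_iff_toColex_lt_toColex (le_refl 2),
      bset_sum, bset_sum]
    exact hmm
  have h2 := (Finset.Colex.toColex_image_lt_toColex_image (pval_strictMono σ hn)).2 h1
  have h3 := (Finset.geomSum_lt_geomSum_iff_toColex_lt_toColex (le_refl 2)).2 h2
  omega

lemma entry (i j : ℕ) (hi : i < 2^nb) (hj : j < 2^nb) :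
    Gnat n (fnat σ hn i) (fnat σ hn j) = Gnat nb i j := by
  have hG2 : G2 1 1 = 1 := rfl
  rw [Gnat, Gnat, ← Fin.prod_univ_eq_prod_range, ← Fin.prod_univ_eq_prod_range,
    ← Finset.prod_mul_prod_compl (Tset nb σ)]
  have hcompl : ∏ k ∈ (Tset nb σ)ᶜ,
      G2 (if Nat.testBit (fnat σ hn i) k then 1 else 0)
        (if Nat.testBit (fnat σ hn j) k then 1 else 0) = 1 := by
    apply Finset.prod_eq_one
    intro k hk
    rw [Finset.mem_compl] at hk
    rw [testBit_fnat, decide_eq_true (mem_Uset_compl σ hn hk),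
      testBit_fnat, decide_eq_true (mem_Uset_compl σ hn hk)]
    simpa using hG2
  rw [hcompl, mul_one]
  have hTimg : Tset nb σ = Finset.univ.image
      (fun a : Fin nb => (⟨pval σ hn a.val, pval_lt σ hn a.2⟩ : Fin n)) := by
    ext k
    simp only [Finset.mem_image, Finset.mem_univ, true_and]
    constructor
    · intro hk
      obtain ⟨a, ha, hav⟩ := pval_surj σ hn hk
      exact ⟨⟨a, ha⟩, Fin.ext hav⟩
    · rintro ⟨a, rfl⟩
      exact pval_mem σ hn a.2
  rw [hTimg, Finset.prod_image (by
    intro a _ b _ hab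
    have : pval σ hn a.val = pval σ hn b.val := congrArg Fin.val hab
    exact Fin.ext ((pval_strictMono σ hn).injective this))]
  apply Finset.prod_congr rfl
  intro a _
  have hbi : Nat.testBit (fnat σ hn i) (pval σ hn a.val) = Nat.testBit i a.val := by
    rw [testBit_fnat]
    by_cases h : Nat.testBit i a.val
    · rw [h, decide_eq_true ((mem_Uset_pval σ hn a.2).2 h)]
    · rw [Bool.eq_false_iff.2 h, decide_eq_false
        (fun hc => h ((mem_Uset_pval σ hn a.2).1 hc))]
  have hbj : Nat.testBit (fnat σ hn j) (pval σ hn a.val) = Nat.testBit j a.val := by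
    rw [testBit_fnat]
    by_cases h : Nat.testBit j a.val
    · rw [h, decide_eq_true ((mem_Uset_pval σ hn a.2).2 h)]
    · rw [Bool.eq_false_iff.2 h, decide_eq_false
        (fun hc => h ((mem_Uset_pval σ hn a.2).1 hc))]
    
  rw [show ((⟨pval σ hn a.val, pval_lt σ hn a.2⟩ : Fin n) : ℕ) = pval σ hn a.val from rfl,
    hbi, hbj]

end Main

end Stmt19Aux

/-- every bit-permuted successive puncturing pattern with
power-of-two complement size is hierarchical: for
`B = (bit-permutation image of {0,...,N-N̄-1})` and `e` the increasing
enumeration of `B^c`, the submatrix `G_N(B^c,B^c)` equals `G_N̄`. -/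
theorem stmt_19 (n nb : ℕ) (hn : nb < n) (σ : Equiv.Perm (Fin n))
    (B : Set ℕ) (hB : B = bperm n σ '' Set.Iio (2 ^ n - 2 ^ nb))
    (e : Fin (2 ^ nb) → Fin (2 ^ n)) (he : StrictMono e)
    (hrange : ∀ x : Fin (2 ^ n), x ∈ Set.range e ↔ x.val ∉ B) :
    (GN n).submatrix e e = GN nb := by
  classical
  open Stmt19Aux in
  -- the explicit increasing enumeration of the complement
  set f : Fin (2^nb) → Fin (2^n) :=
    fun m => ⟨fnat σ hn m.val, fnat_lt σ hn m.2⟩ with hf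
  have hf_mono : StrictMono f := by
    intro m m' hmm
    show fnat σ hn m.val < fnat σ hn m'.val
    exact fnat_strictMono σ hn m.2 m'.2 hmm
  -- membership in the complement of B via bits
  have hnotB : ∀ x : Fin (2^n), x.val ∉ B ↔
      ∀ k : Fin n, k ∉ Tset nb σ → Nat.testBit x.val k = true := by
    intro x
    have hxlt : x.val < 2^n := x.2
    have hyB : x.val ∈ B ↔ bperm n σ⁻¹ x.val < 2^n - 2^nb := by
      rw [hB]
      constructor
      · rintro ⟨i, hi, hix⟩
        rw [Set.mem_Iio] at hi
        have hi2 : i < 2^n := lt_of_lt_of_le hi (Nat.sub_le _ _)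
        rw [← hix, bperm_inv n σ i hi2]
        exact hi
      · intro hlt
        refine ⟨bperm n σ⁻¹ x.val, Set.mem_Iio.2 hlt, ?_⟩
        have := bperm_inv n σ⁻¹ x.val hxlt
        rwa [inv_inv] at this
    rw [hyB, not_lt, high_bits n nb hn _ (bperm_lt n σ⁻¹ x.val)]
    constructor
    · intro h k hk
      simp only [Tset, Finset.mem_filter, Finset.mem_univ, true_and, not_lt] at hk
      have hkn : ((σ k : Fin n) : ℕ) < n := (σ k).2
      have := h (σ k) hk hkn
      rw [show ((σ k : Fin n) : ℕ) = ((σ k : Fin n) : ℕ) from rfl] at this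
      rw [testBit_bperm n σ⁻¹ x.val (σ k)] at this
      simpa using this
    · intro h k hk1 hk2
      rw [show k = ((⟨k, hk2⟩ : Fin n) : ℕ) from rfl, testBit_bperm]
      apply h
      simp only [Tset, Finset.mem_filter, Finset.mem_univ, true_and, not_lt]
      have : σ (σ⁻¹ ⟨k, hk2⟩) = ⟨k, hk2⟩ := by simp
      rw [this]
      exact hk1
  -- f has the same range as e
  have hrange_f : ∀ x : Fin (2^n), x ∈ Set.range f ↔ x.val ∉ B := by
    intro x
    rw [hnotB]
    constructor
    · rintro ⟨m, rfl⟩ k hk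
      show Nat.testBit (fnat σ hn m.val) k = true
      rw [testBit_fnat]
      exact decide_eq_true (mem_Uset_compl σ hn hk)
    · intro hx
      set m0 : ℕ := ∑ a ∈ (Finset.range nb).filter
        (fun a => Nat.testBit x.val (pval σ hn a)), 2^a with hm0def
      have hm0 : m0 < 2^nb := by
        apply sum_lt
        intro a ha
        exact Finset.mem_range.1 (Finset.mem_filter.1 ha).1
      refine ⟨⟨m0, hm0⟩, ?_⟩
      apply Fin.ext
      show fnat σ hn m0 = x.val
      apply Nat.eq_of_testBit_eq
      intro j
      have hbs : bset m0 = (Finset.range nb).filter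
          (fun a => Nat.testBit x.val (pval σ hn a)) := bset_of_sum
      by_cases hj : j < n
      · by_cases hjT : (⟨j, hj⟩ : Fin n) ∈ Tset nb σ
        · obtain ⟨a, ha, hav⟩ := pval_surj σ hn hjT
          have hav' : pval σ hn a = j := hav
          rw [← hav', testBit_fnat]
          by_cases hb : Nat.testBit x.val (pval σ hn a)
          · rw [hb]
            apply decide_eq_true
            apply (mem_Uset_pval σ hn ha).2
            apply mem_bset.1
            rw [hbs]
            exact Finset.mem_filter.2 ⟨Finset.mem_range.2 ha, hb⟩
          · rw [Bool.eq_false_iff.2 hb]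
            apply decide_eq_false
            intro hc
            have := (mem_Uset_pval σ hn ha).1 hc
            have hmem := mem_bset.2 this
            rw [hbs] at hmem
            exact hb (Finset.mem_filter.1 hmem).2
        · rw [testBit_fnat, decide_eq_true (mem_Uset_compl σ hn hjT)]
          exact (hx ⟨j, hj⟩ hjT).symm
      · rw [testBit_fnat]
        have h1 : j ∉ Uset σ hn m0 := fun hc => hj (Uset_sub σ hn hm0 j hc)
        rw [decide_eq_false h1]
        rw [Nat.testBit_lt_two_pow]
        exact lt_of_lt_of_le x.2 (Nat.pow_le_pow_right (by norm_num) (by omega))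
  -- hence e = f
  have hef : e = f := by
    haveI : WellFoundedLT (Fin (2^nb)) := Finite.to_wellFoundedLT
    apply (he.range_inj hf_mono).1
    ext x
    rw [hrange x, hrange_f x]
  subst hef
  -- final entry computation
  ext i j
  show Gnat n (fnat σ hn i.val) (fnat σ hn j.val) = Gnat nb i.val j.val
  exact entry σ hn i.val j.val i.2 j.2
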